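/- Let m ≥ 1, r ∈ ℤ_{≥0}, α_0 ∈ ℂ, λ_0, λ_1,…,λ_m, α_1,…,α_m ∈ ℂ* with λ_0,…,λ_m pairwise distinct, and let V be an infinite-dimensional irreducible L̄_r-module. Then for every k ∈ ℤ the operator L_k is not locally nilpotent on M(V,Ω(λ_0,α_0)) ⊗ ⊗_{i=1}^m Ω(λ_i,α_i); consequently this Virasoro module is not isomorphic to any irreducible Virasoro module M for which there exists R ∈ ℤ_{≥0} such that the action of L_k on M is locally nilpotent for all k ≥ R. -/

import Mathlib

open TensorProduct

/-- Substitution `X_i ↦ X_i - k` (in the variable `i` only) on `ℂ[X_0,…,X_{N-1}]`. -/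
noncomputable def shiftVar {N : ℕ} (i : Fin N) (k : ℂ) :
    MvPolynomial (Fin N) ℂ →ₗ[ℂ] MvPolynomial (Fin N) ℂ :=
  (MvPolynomial.aeval fun j =>
    MvPolynomial.X j - if j = i then MvPolynomial.C k else 0).toLinearMap

/-- The operator `L_k` on `⊗_i Ω(λ_i,α_i) = ℂ[X_0,…,X_{N-1}]`. -/
noncomputable def omegaOp {N : ℕ} (lam al : Fin N → ℂ) (k : ℤ) :
    MvPolynomial (Fin N) ℂ →ₗ[ℂ] MvPolynomial (Fin N) ℂ :=
  ∑ i : Fin N, (lam i ^ k) •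
    ((LinearMap.mulLeft ℂ (MvPolynomial.X i - MvPolynomial.C ((k : ℂ) * al i))).comp
      (shiftVar i (k : ℂ)))

/-- The operator `L_k` on `M(V,Ω(λ_0,α_0)) ⊗ ⊗_{i=1}^m Ω(λ_i,α_i) = V ⊗ ℂ[X_0,…,X_m]`. -/
noncomputable def MOp {V : Type*} [AddCommGroup V] [Module ℂ V]
    (B : ℕ → V →ₗ[ℂ] V) (r : ℕ) {m : ℕ} (lam al : Fin (m + 1) → ℂ) (k : ℤ) :
    V ⊗[ℂ] MvPolynomial (Fin (m + 1)) ℂ →ₗ[ℂ] V ⊗[ℂ] MvPolynomial (Fin (m + 1)) ℂ :=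
  TensorProduct.map LinearMap.id (omegaOp lam al k) +
  ∑ j ∈ Finset.range (r + 1),
    (((k : ℂ) ^ (j + 1)) / ((j + 1).factorial : ℂ)) •
      TensorProduct.map (B j) ((lam 0 ^ k) • shiftVar 0 (k : ℂ))

section Aux
open MvPolynomial

lemma factor_deg {n : ℕ} (i j : Fin n) (k : ℂ) :
    (MvPolynomial.X j - if j = i then MvPolynomial.C k else 0 :
      MvPolynomial (Fin n) ℂ).totalDegree ≤ 1 := by
  by_cases h : j = i
  · simp only [h, if_pos rfl, sub_eq_add_neg, ← C_neg]
    refine (totalDegree_add _ _).trans ?_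
    simp [totalDegree_X, totalDegree_C]
  · simp [h, totalDegree_X]

lemma shiftVar_monomial {n : ℕ} (i : Fin n) (k : ℂ) (m : Fin n →₀ ℕ) (a : ℂ) :
    shiftVar i k (monomial m a) =
      C a * m.prod fun j e => (X j - if j = i then C k else 0) ^ e := by
  show (MvPolynomial.aeval _) (monomial m a) = _
  rw [aeval_monomial, algebraMap_eq]

lemma shiftVar_totalDegree_le {n : ℕ} (i : Fin n) (k : ℂ) (p : MvPolynomial (Fin n) ℂ) :
    (shiftVar i k p).totalDegree ≤ p.totalDegree := by
  conv_lhs => rw [p.as_sum, map_sum]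
  refine totalDegree_finsetSum_le fun m hm => ?_
  rw [shiftVar_monomial]
  refine (totalDegree_mul _ _).trans ?_
  rw [totalDegree_C, zero_add]
  refine le_trans (totalDegree_finset_prod _ _) ?_
  refine le_trans ?_ (le_totalDegree hm)
  rw [Finsupp.sum]
  refine Finset.sum_le_sum fun j hj => ?_
  refine (totalDegree_pow _ _).trans ?_
  calc m j * (X j - if j = i then C k else 0).totalDegree ≤ m j * 1 :=
        Nat.mul_le_mul_left _ (factor_deg i j k)
    _ = m j := Nat.mul_one _


lemma weight_single {n : ℕ} (i : Fin n) (N : ℕ) :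
    ∑ j ∈ (Finsupp.single i N).support, (Finsupp.single i N) j = N := by
  show (Finsupp.single i N).sum (fun _ e => e) = N
  exact Finsupp.sum_single_index rfl

lemma coeff_single_zero_of_lt {n N : ℕ} (i : Fin n) {p : MvPolynomial (Fin n) ℂ}
    (h : p.totalDegree < N) : coeff (Finsupp.single i N) p = 0 := by
  refine coeff_eq_zero_of_totalDegree_lt ?_
  rwa [weight_single]

lemma shiftVar_coeff_monomial {n N : ℕ} (i : Fin n) (k : ℂ) (m : Fin n →₀ ℕ) (a : ℂ)
    (hm : ∑ j ∈ m.support, m j ≤ N) :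
    coeff (Finsupp.single i N) (shiftVar i k (monomial m a)) =
      coeff (Finsupp.single i N) (monomial m a) := by
  classical
  by_cases hcase : ∀ j ∈ m.support, j = i
  · -- m = single i (m i)
    have hm' : m = Finsupp.single i (m i) :=
      Finsupp.eq_single_iff.2 ⟨fun j hj => Finset.mem_singleton.2 (hcase j hj), rfl⟩
    set e := m i with he
    have hsum : ∑ j ∈ m.support, m j = e := by
      rw [hm']; exact weight_single i e
    have heN : e ≤ N := hsum ▸ hm
    have hprod : ((Finsupp.single i e).prod fun j e' => (X j - if j = i then C k else 0) ^ e')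
        = (X i - C k) ^ e := by
      rw [Finsupp.prod_single_index (h := fun j e' => (X j - if j = i then C k else 0) ^ e')
        (pow_zero _), if_pos rfl]
    rw [hm', shiftVar_monomial, hprod, coeff_monomial]
    have expand : (X i - C k : MvPolynomial (Fin n) ℂ) ^ e =
        (∑ t ∈ Finset.range e, X i ^ t * C (-k) ^ (e - t) * (e.choose t : MvPolynomial (Fin n) ℂ))
          + X i ^ e := by
      rw [sub_eq_add_neg, ← C_neg, add_pow, Finset.sum_range_succ]
      simp
    rw [expand, mul_add, coeff_add, coeff_C_mul, coeff_C_mul, coeff_sum]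
    have hz : ∀ t ∈ Finset.range e,
        coeff (Finsupp.single i N)
          (X i ^ t * C (-k) ^ (e - t) * (e.choose t : MvPolynomial (Fin n) ℂ)) = 0 := by
      intro t ht
      refine coeff_single_zero_of_lt i ?_
      have ht' : t < e := Finset.mem_range.1 ht
      calc (X i ^ t * C (-k) ^ (e - t) * (e.choose t : MvPolynomial (Fin n) ℂ)).totalDegree
          ≤ (X i ^ t * C (-k) ^ (e - t)).totalDegree
            + ((e.choose t : MvPolynomial (Fin n) ℂ)).totalDegree := totalDegree_mul _ _
        _ ≤ ((X i ^ t).totalDegree + (C (-k) ^ (e-t) : MvPolynomial (Fin n) ℂ).totalDegree)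
            + ((e.choose t : MvPolynomial (Fin n) ℂ)).totalDegree :=
              Nat.add_le_add_right (totalDegree_mul _ _) _
        _ ≤ (t * 1 + (e - t) * 0) + 0 := by
              refine Nat.add_le_add (Nat.add_le_add ?_ ?_) ?_
              · exact (totalDegree_pow _ _).trans (by simp [totalDegree_X])
              · exact (totalDegree_pow _ _).trans (by simp [totalDegree_C])
              · rw [← C_eq_coe_nat, totalDegree_C]
        _ = t := by ring
        _ < N := lt_of_lt_of_le ht' heN
    rw [Finset.sum_eq_zero hz, coeff_X_pow]
    by_cases hEq : Finsupp.single i e = Finsupp.single i N <;> simp [hEq]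
  · push_neg at hcase
    obtain ⟨j, hj, hji⟩ := hcase
    have hmj : m j ≠ 0 := Finsupp.mem_support_iff.1 hj
    have hRHS : coeff (Finsupp.single i N) (monomial m a) = 0 := by
      rw [coeff_monomial, if_neg]
      intro hEq
      apply hmj
      rw [hEq, Finsupp.single_eq_of_ne' (Ne.symm hji)]
    rw [hRHS, shiftVar_monomial]
    obtain ⟨e, he⟩ := Nat.exists_eq_succ_of_ne_zero hmj
    have hG : (m.prod fun j' e' => (X j' - if j' = i then C k else 0) ^ e') =
        (X j - if j = i then C k else 0) ^ (m j)
          * (m.erase j).prod fun j' e' => (X j' - if j' = i then C k else 0) ^ e' :=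
      (Finsupp.mul_prod_erase m j _ hj).symm
    rw [hG, if_neg hji, sub_zero, he, pow_succ]
    have : C a * (X j ^ e * X j *
        (m.erase j).prod fun j' e' => (X j' - if j' = i then C k else 0) ^ e') =
        X j * (C a * (X j ^ e *
        (m.erase j).prod fun j' e' => (X j' - if j' = i then C k else 0) ^ e')) := by ring
    rw [this, coeff_X_mul', if_neg]
    simp [Finsupp.single_eq_of_ne' (Ne.symm hji)]


lemma shiftVar_coeff_top {n N : ℕ} (i : Fin n) (k : ℂ) {p : MvPolynomial (Fin n) ℂ}
    (h : p.totalDegree ≤ N) :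
    coeff (Finsupp.single i N) (shiftVar i k p) = coeff (Finsupp.single i N) p := by
  conv_lhs => rw [p.as_sum]
  conv_rhs => rw [p.as_sum]
  rw [map_sum, coeff_sum, coeff_sum]
  refine Finset.sum_congr rfl fun m hm => ?_
  exact shiftVar_coeff_monomial i k m _ (le_trans (le_totalDegree hm) h)

lemma sub_C_deg {n : ℕ} (j : Fin n) (c : ℂ) :
    (MvPolynomial.X j - MvPolynomial.C c : MvPolynomial (Fin n) ℂ).totalDegree ≤ 1 := by
  rw [sub_eq_add_neg, ← C_neg]
  refine (totalDegree_add _ _).trans ?_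
  simp [totalDegree_X, totalDegree_C]

lemma omegaOp_apply {n : ℕ} (lam al : Fin n → ℂ) (k : ℤ) (p : MvPolynomial (Fin n) ℂ) :
    omegaOp lam al k p = ∑ i : Fin n, (lam i ^ k) •
      ((X i - C ((k : ℂ) * al i)) * shiftVar i (k : ℂ) p) := by
  simp [omegaOp, LinearMap.sum_apply, LinearMap.smul_apply, LinearMap.comp_apply,
    LinearMap.mulLeft_apply]

lemma omegaOp_deg {n : ℕ} (lam al : Fin n → ℂ) (k : ℤ) (p : MvPolynomial (Fin n) ℂ) :
    (omegaOp lam al k p).totalDegree ≤ p.totalDegree + 1 := by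
  rw [omegaOp_apply]
  refine totalDegree_finsetSum_le fun i _ => ?_
  refine (totalDegree_smul_le _ _).trans ?_
  refine (totalDegree_mul _ _).trans ?_
  have h1 := sub_C_deg i ((k : ℂ) * al i)
  have h2 := shiftVar_totalDegree_le i (k : ℂ) p
  omega

lemma omegaOp_coeff {n N : ℕ} (lam al : Fin n → ℂ) (k : ℤ) {p : MvPolynomial (Fin n) ℂ}
    (hp : p.totalDegree ≤ N) (i0 : Fin n) :
    coeff (Finsupp.single i0 (N + 1)) (omegaOp lam al k p) =
      lam i0 ^ k * coeff (Finsupp.single i0 N) p := by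
  classical
  rw [omegaOp_apply, coeff_sum]
  have hterm : ∀ i : Fin n,
      coeff (Finsupp.single i0 (N + 1))
        ((lam i ^ k) • ((X i - C ((k : ℂ) * al i)) * shiftVar i (k : ℂ) p)) =
      if i = i0 then lam i0 ^ k * coeff (Finsupp.single i0 N) p else 0 := by
    intro i
    have hq : (shiftVar i (k : ℂ) p).totalDegree < N + 1 :=
      lt_of_le_of_lt (le_trans (shiftVar_totalDegree_le _ _ _) hp) (Nat.lt_succ_self N)
    rw [coeff_smul, smul_eq_mul, sub_mul, coeff_sub, coeff_C_mul,
      coeff_single_zero_of_lt i0 hq, mul_zero, sub_zero, coeff_X_mul']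
    by_cases hi : i = i0
    · subst hi
      rw [if_pos (by simp [Finsupp.mem_support_iff]), if_pos rfl]
      have hsub : Finsupp.single i (N + 1) - Finsupp.single i 1 =
          Finsupp.single i N := by
        rw [← Finsupp.single_tsub]; simp
      rw [hsub, shiftVar_coeff_top i (k : ℂ) hp]
    · rw [if_neg (by simp [Finsupp.mem_support_iff, Finsupp.single_eq_of_ne'
        (fun h => hi h.symm)]), if_neg hi, mul_zero]
  rw [Finset.sum_congr rfl (fun i _ => hterm i)]
  simp


/-- Tensors whose polynomial parts have total degree at most `N`. -/
noncomputable def Dsub (V : Type*) [AddCommGroup V] [Module ℂ V] (n N : ℕ) :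
    Submodule ℂ (V ⊗[ℂ] MvPolynomial (Fin n) ℂ) :=
  Submodule.span ℂ {x | ∃ (u : V) (q : MvPolynomial (Fin n) ℂ),
    q.totalDegree ≤ N ∧ x = u ⊗ₜ q}

lemma tmul_mem_Dsub {V : Type*} [AddCommGroup V] [Module ℂ V] {n N : ℕ}
    (u : V) {q : MvPolynomial (Fin n) ℂ} (hq : q.totalDegree ≤ N) :
    u ⊗ₜ q ∈ Dsub V n N :=
  Submodule.subset_span ⟨u, q, hq, rfl⟩

lemma MOp_tmul {V : Type*} [AddCommGroup V] [Module ℂ V]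
    (B : ℕ → V →ₗ[ℂ] V) (r : ℕ) {m : ℕ} (lam al : Fin (m + 1) → ℂ) (k : ℤ)
    (u : V) (p : MvPolynomial (Fin (m + 1)) ℂ) :
    MOp B r lam al k (u ⊗ₜ p) = u ⊗ₜ (omegaOp lam al k p) +
      ∑ j ∈ Finset.range (r + 1),
        (((k : ℂ) ^ (j + 1)) / ((j + 1).factorial : ℂ)) •
          (B j u ⊗ₜ ((lam 0 ^ k) • shiftVar 0 (k : ℂ) p)) := by
  simp [MOp, LinearMap.add_apply, LinearMap.sum_apply, LinearMap.smul_apply,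
    TensorProduct.map_tmul]

lemma MOp_mem {V : Type*} [AddCommGroup V] [Module ℂ V]
    (B : ℕ → V →ₗ[ℂ] V) (r : ℕ) {m : ℕ} (lam al : Fin (m + 1) → ℂ) (k : ℤ)
    {N : ℕ} {w : V ⊗[ℂ] MvPolynomial (Fin (m + 1)) ℂ} (hw : w ∈ Dsub V (m + 1) N) :
    MOp B r lam al k w ∈ Dsub V (m + 1) (N + 1) := by
  induction hw using Submodule.span_induction with
  | mem x hx =>
    obtain ⟨u, q, hq, rfl⟩ := hx
    rw [MOp_tmul]
    refine Submodule.add_mem _ (tmul_mem_Dsub u ((omegaOp_deg lam al k q).trans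
      (Nat.add_le_add_right hq 1))) (Submodule.sum_mem _ fun j _ => ?_)
    refine Submodule.smul_mem _ _ (tmul_mem_Dsub (B j u) ?_)
    refine (totalDegree_smul_le _ _).trans ?_
    exact (shiftVar_totalDegree_le _ _ _).trans (hq.trans (Nat.le_succ N))
  | zero => rw [map_zero]; exact Submodule.zero_mem _
  | add x y hx hy ihx ihy => rw [map_add]; exact Submodule.add_mem _ ihx ihy
  | smul a x hx ihx => rw [map_smul]; exact Submodule.smul_mem _ _ ihx

/-- The functional `ξ ⊗ (coefficient of X_i^N)`. -/
noncomputable def Ffun {V : Type*} [AddCommGroup V] [Module ℂ V]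
    (ξ : V →ₗ[ℂ] ℂ) {n : ℕ} (i : Fin n) (N : ℕ) :
    V ⊗[ℂ] MvPolynomial (Fin n) ℂ →ₗ[ℂ] ℂ :=
  (TensorProduct.lid ℂ ℂ).toLinearMap ∘ₗ
    TensorProduct.map ξ (MvPolynomial.lcoeff ℂ (Finsupp.single i N))

lemma Ffun_tmul {V : Type*} [AddCommGroup V] [Module ℂ V]
    (ξ : V →ₗ[ℂ] ℂ) {n : ℕ} (i : Fin n) (N : ℕ) (u : V) (q : MvPolynomial (Fin n) ℂ) :
    Ffun ξ i N (u ⊗ₜ q) = ξ u * coeff (Finsupp.single i N) q := by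
  simp [Ffun, TensorProduct.lid_tmul, smul_eq_mul, lcoeff_apply, mul_comm]

lemma Ffun_MOp {V : Type*} [AddCommGroup V] [Module ℂ V]
    (B : ℕ → V →ₗ[ℂ] V) (r : ℕ) {m : ℕ} (lam al : Fin (m + 1) → ℂ) (k : ℤ)
    (ξ : V →ₗ[ℂ] ℂ) {N : ℕ} {w : V ⊗[ℂ] MvPolynomial (Fin (m + 1)) ℂ}
    (hw : w ∈ Dsub V (m + 1) N) :
    Ffun ξ 0 (N + 1) (MOp B r lam al k w) = lam 0 ^ k * Ffun ξ 0 N w := by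
  induction hw using Submodule.span_induction with
  | mem x hx =>
    obtain ⟨u, q, hq, rfl⟩ := hx
    rw [MOp_tmul, map_add, map_sum]
    have hzero : ∀ j ∈ Finset.range (r + 1),
        Ffun ξ 0 (N + 1) ((((k : ℂ) ^ (j + 1)) / ((j + 1).factorial : ℂ)) •
          (B j u ⊗ₜ ((lam 0 ^ k) • shiftVar 0 (k : ℂ) q))) = 0 := by
      intro j _
      rw [map_smul, smul_eq_mul, Ffun_tmul, coeff_smul,
        coeff_single_zero_of_lt 0 (lt_of_le_of_lt ((shiftVar_totalDegree_le _ _ _).trans hq)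
          (Nat.lt_succ_self N))]
      simp
    rw [Finset.sum_eq_zero hzero, add_zero, Ffun_tmul, Ffun_tmul,
      omegaOp_coeff lam al k hq 0]
    ring
  | zero => simp
  | add x y hx hy ihx ihy => rw [map_add, map_add, map_add, ihx, ihy]; ring
  | smul a x hx ihx => rw [map_smul, map_smul, map_smul, smul_eq_mul, smul_eq_mul, ihx]; ring

end Aux

/-- **Proposition 5.3 (last part).** Let `m ≥ 1`, `r ∈ ℤ_{≥0}`, `α_0 ∈ ℂ`,
`λ_0,…,λ_m, α_1,…,α_m ∈ ℂ*` with `λ_0,…,λ_m` pairwise distinct, and `V` an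
infinite-dimensional irreducible `L̄_r`-module. Then no `L_k` acts locally
nilpotently on `M(V,Ω(λ_0,α_0)) ⊗ ⊗_{i=1}^m Ω(λ_i,α_i)`, and consequently this
module is not isomorphic to any irreducible Virasoro module `M` on which the
operators `L_k` act locally nilpotently for all `k ≥ R`. -/
theorem statement17 {V : Type*} [AddCommGroup V] [Module ℂ V]
    (m r : ℕ) (hm : 1 ≤ m)
    (lam al : Fin (m + 1) → ℂ)
    (hlam : ∀ i, lam i ≠ 0) (hlaminj : Function.Injective lam)
    (hal : ∀ i, i ≠ 0 → al i ≠ 0)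
    (B : ℕ → V →ₗ[ℂ] V)
    (hBtop : ∀ i, r < i → B i = 0)
    (hBrel : ∀ i j, i ≤ r → j ≤ r →
      B i ∘ₗ B j - B j ∘ₗ B i = (((j : ℂ) - (i : ℂ)) • B (i + j) : V →ₗ[ℂ] V))
    (hVne : ∃ v : V, v ≠ 0)
    (hVirr : ∀ U : Submodule ℂ V, (∀ i, i ≤ r → ∀ w ∈ U, B i w ∈ U) → U = ⊥ ∨ U = ⊤)
    (hVinf : ¬ Module.Finite ℂ V) :
    (∀ k : ℤ, ¬ ∀ w : V ⊗[ℂ] MvPolynomial (Fin (m + 1)) ℂ,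
        ∃ N : ℕ, (⇑(MOp B r lam al k))^[N] w = 0) ∧
    (∀ (M : Type) (_ : AddCommGroup M) (_ : Module ℂ M)
        (T : ℤ → M →ₗ[ℂ] M) (c : ℂ),
      (∀ a b : ℤ, T a ∘ₗ T b - T b ∘ₗ T a =
        ((((b : ℂ) - (a : ℂ)) • T (a + b) : M →ₗ[ℂ] M) +
          (if a + b = 0 then (((a : ℂ) ^ 3 - (a : ℂ)) / 12) * c else 0) •
            LinearMap.id)) →
      (∃ w : M, w ≠ 0) →
      (∀ U : Submodule ℂ M, (∀ k : ℤ, ∀ w ∈ U, T k w ∈ U) → U = ⊥ ∨ U = ⊤) →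
      (∃ R : ℕ, ∀ k : ℤ, (R : ℤ) ≤ k → ∀ w : M, ∃ N : ℕ, (⇑(T k))^[N] w = 0) →
      ¬ ∃ φ : (V ⊗[ℂ] MvPolynomial (Fin (m + 1)) ℂ) ≃ₗ[ℂ] M,
          ∀ (k : ℤ) (x : V ⊗[ℂ] MvPolynomial (Fin (m + 1)) ℂ),
            φ (MOp B r lam al k x) = T k (φ x)) := by
  have key : ∀ k : ℤ, ¬ ∀ w : V ⊗[ℂ] MvPolynomial (Fin (m + 1)) ℂ,
      ∃ N : ℕ, (⇑(MOp B r lam al k))^[N] w = 0 := by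
    intro k hloc
    obtain ⟨v, hv⟩ := hVne
    obtain ⟨ξ, hξ⟩ := (LinearMap.toSpanSingleton ℂ V v).exists_leftInverse_of_injective
      (LinearMap.ker_toSpanSingleton (R := ℂ) (M := V) hv)
    have hξv : ξ v = 1 := by
      have h1 := LinearMap.congr_fun hξ 1
      simpa [LinearMap.toSpanSingleton_apply] using h1
    have main : ∀ N : ℕ,
        (⇑(MOp B r lam al k))^[N] (v ⊗ₜ (1 : MvPolynomial (Fin (m + 1)) ℂ))
          ∈ Dsub V (m + 1) N ∧
        Ffun ξ (0 : Fin (m + 1)) N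
          ((⇑(MOp B r lam al k))^[N] (v ⊗ₜ (1 : MvPolynomial (Fin (m + 1)) ℂ)))
          = (lam 0 ^ k) ^ N := by
      intro N
      induction N with
      | zero =>
        refine ⟨tmul_mem_Dsub v (by simp), ?_⟩
        rw [Function.iterate_zero_apply, Ffun_tmul, hξv]
        simp [Finsupp.single_zero]
      | succ N ih =>
        rw [Function.iterate_succ_apply']
        refine ⟨MOp_mem B r lam al k ih.1, ?_⟩
        rw [Ffun_MOp B r lam al k ξ ih.1, ih.2, pow_succ]
        ring
    obtain ⟨N, hN⟩ := hloc (v ⊗ₜ 1)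
    have h2 := (main N).2
    rw [hN, map_zero] at h2
    exact pow_ne_zero N (zpow_ne_zero k (hlam 0)) h2.symm
  refine ⟨key, ?_⟩
  intro M _ _ T c hrel hne hirr hRex hiso
  obtain ⟨R, hR⟩ := hRex
  obtain ⟨φ, hφ⟩ := hiso
  apply key (R : ℤ)
  intro w
  obtain ⟨N, hN⟩ := hR (R : ℤ) le_rfl (φ w)
  refine ⟨N, ?_⟩
  have hcomm : ∀ (NN : ℕ) (x : V ⊗[ℂ] MvPolynomial (Fin (m + 1)) ℂ),
      φ ((⇑(MOp B r lam al (R : ℤ)))^[NN] x) = (⇑(T (R : ℤ)))^[NN] (φ x) := by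
    intro NN
    induction NN with
    | zero => intro x; simp
    | succ n ih =>
      intro x
      rw [Function.iterate_succ_apply', Function.iterate_succ_apply', hφ, ih]
  apply φ.injective
  rw [hcomm N w, hN, map_zero]
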